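/- Let r ≥ 1, C > 0, and let x : [0, ∞) → ℝ^r be a function such that ‖x(t) − x(s)‖ ≤ C whenever s, t ≥ 0 satisfy |t − s| ≤ 1. Then there exist constants D > 0 and D̃ > 0 and a continuously differentiable map y : [0, ∞) → ℝ^r such that ‖x(t) − y(t)‖ ≤ D and ‖y′(t)‖ ≤ D̃ for all t ≥ 0. -/

import Mathlib

open Set Filter Real

private lemma st_deriv_lt_zero {s : ℝ} (hs : s < 0) :
    deriv Real.smoothTransition s = 0 := by
  have h : Real.smoothTransition =ᶠ[nhds s] fun _ => (0 : ℝ) := by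
    filter_upwards [Iio_mem_nhds hs] with u hu
    exact Real.smoothTransition.zero_of_nonpos hu.le
  rw [h.deriv_eq, deriv_const]

private lemma st_deriv_gt_one {s : ℝ} (hs : 1 < s) :
    deriv Real.smoothTransition s = 0 := by
  have h : Real.smoothTransition =ᶠ[nhds s] fun _ => (1 : ℝ) := by
    filter_upwards [Ioi_mem_nhds hs] with u hu
    exact Real.smoothTransition.one_of_one_le hu.le
  rw [h.deriv_eq, deriv_const]

private lemma st_deriv_cont : Continuous (deriv Real.smoothTransition) :=
  (Real.smoothTransition.contDiff (n := 1)).continuous_deriv le_rfl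

private lemma st_deriv_nonpos {s : ℝ} (hs : s ≤ 0) :
    deriv Real.smoothTransition s = 0 := by
  rcases lt_or_eq_of_le hs with h | h
  · exact st_deriv_lt_zero h
  · subst h
    have h1 : Tendsto (deriv Real.smoothTransition) (nhdsWithin (0:ℝ) (Iio 0))
        (nhds (deriv Real.smoothTransition 0)) :=
      (st_deriv_cont.tendsto 0).mono_left nhdsWithin_le_nhds
    have h2 : Tendsto (deriv Real.smoothTransition) (nhdsWithin (0:ℝ) (Iio 0))
        (nhds 0) := by
      apply Tendsto.congr' _ tendsto_const_nhds
      filter_upwards [self_mem_nhdsWithin] with u hu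
      exact (st_deriv_lt_zero hu).symm
    exact tendsto_nhds_unique h1 h2

private lemma st_deriv_one_le {s : ℝ} (hs : 1 ≤ s) :
    deriv Real.smoothTransition s = 0 := by
  rcases lt_or_eq_of_le hs with h | h
  · exact st_deriv_gt_one h
  · subst h
    have h1 : Tendsto (deriv Real.smoothTransition) (nhdsWithin (1:ℝ) (Ioi 1))
        (nhds (deriv Real.smoothTransition 1)) :=
      (st_deriv_cont.tendsto 1).mono_left nhdsWithin_le_nhds
    have h2 : Tendsto (deriv Real.smoothTransition) (nhdsWithin (1:ℝ) (Ioi 1))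
        (nhds 0) := by
      apply Tendsto.congr' _ tendsto_const_nhds
      filter_upwards [self_mem_nhdsWithin] with u hu
      exact (st_deriv_gt_one hu).symm
    exact tendsto_nhds_unique h1 h2

/-- `C¹`-interpolation (Section 4.5, Equation (48)): a path `x : [0, ∞) → ℝ^r` whose
oscillation on time intervals of length `≤ 1` is bounded by `C` can be approximated within a
uniform distance `D` by a `C¹` path `y` with uniformly bounded derivative. -/
theorem c1_interpolation {r : ℕ} (hr : 1 ≤ r) (C : ℝ) (hC : 0 < C)
    (x : ℝ → EuclideanSpace ℝ (Fin r))
    (hx : ∀ s t : ℝ, 0 ≤ s → 0 ≤ t → |t - s| ≤ 1 → ‖x t - x s‖ ≤ C) :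
    ∃ (D D' : ℝ), 0 < D ∧ 0 < D' ∧
      ∃ y : ℝ → EuclideanSpace ℝ (Fin r), ContDiffOn ℝ 1 y (Set.Ici 0) ∧
        ∀ t ∈ Set.Ici (0 : ℝ), ‖x t - y t‖ ≤ D ∧ ‖derivWithin y (Set.Ici 0) t‖ ≤ D' := by
  classical
  set ψ : ℝ → ℝ := Real.smoothTransition with hψdef
  -- bound for deriv ψ
  obtain ⟨K₀, hK₀⟩ : ∃ K₀, ∀ s ∈ Icc (0:ℝ) 1, ‖deriv ψ s‖ ≤ K₀ :=
    isCompact_Icc.exists_bound_of_continuousOn st_deriv_cont.continuousOn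
  set K : ℝ := max K₀ 0 + 1 with hKdef
  have hKpos : 0 < K := by positivity
  have hK : ∀ s : ℝ, |deriv ψ s| ≤ K := by
    intro s
    rcases le_or_gt s 0 with h | h
    · rw [hψdef, st_deriv_nonpos h]; simp [hKdef]; positivity
    rcases le_or_gt 1 s with h1 | h1
    · rw [hψdef, st_deriv_one_le h1]; simp [hKdef]; positivity
    · calc |deriv ψ s| ≤ K₀ := hK₀ s ⟨h.le, h1.le⟩
        _ ≤ K := by simp [hKdef]; nlinarith [le_max_left K₀ (0:ℝ)]
  -- the increments
  set d : ℕ → EuclideanSpace ℝ (Fin r) := fun n => x ((n : ℝ) + 1) - x n with hddef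
  have hd : ∀ n : ℕ, ‖d n‖ ≤ C := by
    intro n
    exact hx n ((n : ℝ) + 1) (by positivity) (by positivity) (by rw [add_sub_cancel_left]; norm_num)
  -- the interpolation
  set y : ℝ → EuclideanSpace ℝ (Fin r) :=
    fun t => x 0 + ∑' n : ℕ, ψ (t - n) • d n with hydef
  have hloc : ∀ (t : ℝ) (N : ℕ), t < N →
      ∀ s ∈ Iio (N : ℝ), y s = x 0 + ∑ n ∈ Finset.range N, ψ (s - n) • d n := by
    intro t N _ s hs
    rw [hydef]
    refine congrArg (fun z => x 0 + z) (tsum_eq_sum ?_)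
    intro n hn
    have hNn : (N : ℝ) ≤ n := by exact_mod_cast Nat.le_of_not_lt (by simpa using hn)
    have : s - n ≤ 0 := by
      have : s < (N : ℝ) := hs
      linarith
    rw [hψdef, Real.smoothTransition.zero_of_nonpos this, zero_smul]
  -- smooth local models
  have hgsmooth : ∀ N : ℕ, ContDiff ℝ 1
      (fun s : ℝ => x 0 + ∑ n ∈ Finset.range N, ψ (s - n) • d n) := by
    intro N
    refine contDiff_const.add (ContDiff.sum fun n _ => ?_)
    exact (Real.smoothTransition.contDiff.comp (contDiff_id.sub contDiff_const)).smul
      contDiff_const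
  have hterm : ∀ (n : ℕ) (t : ℝ),
      HasDerivAt (fun s : ℝ => ψ (s - n) • d n) ((deriv ψ (t - n)) • d n) t := by
    intro n t
    have h1 : HasDerivAt (fun s : ℝ => s - (n : ℝ)) 1 t := (hasDerivAt_id t).sub_const _
    have h2 : HasDerivAt ψ (deriv ψ (t - n)) (t - n) :=
      ((Real.smoothTransition.contDiff (n := 1)).differentiable one_ne_zero (t - n)).hasDerivAt
    have h3 := h2.comp t h1
    simpa using (h3.smul_const (d n))
  have hgderiv : ∀ (N : ℕ) (t : ℝ),
      HasDerivAt (fun s : ℝ => x 0 + ∑ n ∈ Finset.range N, ψ (s - n) • d n)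
        (∑ n ∈ Finset.range N, (deriv ψ (t - n)) • d n) t := by
    intro N t
    exact (HasDerivAt.fun_sum fun n _ => hterm n t).const_add (x 0)
  -- y eventually equals local model near each point
  have hevent : ∀ t : ℝ, y =ᶠ[nhds t]
      fun s => x 0 + ∑ n ∈ Finset.range (⌈t⌉₊ + 1), ψ (s - n) • d n := by
    intro t
    have htN : t < ((⌈t⌉₊ + 1 : ℕ) : ℝ) := by
      push_cast
      have := Nat.le_ceil t
      linarith
    filter_upwards [Iio_mem_nhds htN] with s hs
    exact hloc t (⌈t⌉₊ + 1) htN s hs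
  have hsmooth : ContDiff ℝ 1 y := by
    rw [contDiff_iff_contDiffAt]
    intro t
    exact ((hgsmooth (⌈t⌉₊ + 1)).contDiffAt).congr_of_eventuallyEq (hevent t)
  have hyderiv : ∀ t : ℝ,
      HasDerivAt y (∑ n ∈ Finset.range (⌈t⌉₊ + 1), (deriv ψ (t - n)) • d n) t := by
    intro t
    exact ((hevent t).hasDerivAt_iff).2 (hgderiv (⌈t⌉₊ + 1) t)
  refine ⟨2 * C, K * C, by positivity, by positivity, y, hsmooth.contDiffOn, ?_⟩
  intro t ht
  have ht0 : (0:ℝ) ≤ t := ht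
  constructor
  · -- distance bound
    set m : ℕ := ⌊t⌋₊ with hmdef
    have hmt : (m : ℝ) ≤ t := Nat.floor_le ht0
    have htm : t < (m : ℝ) + 1 := Nat.lt_floor_add_one t
    have htN : t < ((m + 1 : ℕ) : ℝ) := by push_cast; linarith
    have hyt : y t = x 0 + ∑ n ∈ Finset.range (m + 1), ψ (t - n) • d n :=
      hloc t (m + 1) htN t htN
    have hsplit : ∑ n ∈ Finset.range (m + 1), ψ (t - n) • d n
        = (∑ n ∈ Finset.range m, ψ (t - n) • d n) + ψ (t - m) • d m :=
      Finset.sum_range_succ _ _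
    have hones : ∑ n ∈ Finset.range m, ψ (t - n) • d n
        = ∑ n ∈ Finset.range m, d n := by
      refine Finset.sum_congr rfl fun n hn => ?_
      have hnm : (n : ℝ) + 1 ≤ m := by
        have := Finset.mem_range.1 hn
        exact_mod_cast this
      have : (1:ℝ) ≤ t - n := by linarith
      rw [hψdef, Real.smoothTransition.one_of_one_le this, one_smul]
    have htel : ∑ n ∈ Finset.range m, d n = x m - x 0 := by
      have := Finset.sum_range_sub (fun n : ℕ => x n) m
      rw [hddef]
      simpa [Nat.cast_add, Nat.cast_one] using this
    have hyt2 : y t = x m + ψ (t - m) • d m := by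
      rw [hyt, hsplit, hones, htel]; abel
    have h1 : ‖x t - x m‖ ≤ C := by
      refine hx m t (by positivity) ht0 ?_
      rw [abs_le]; constructor <;> linarith
    have h2 : ‖ψ (t - m) • d m‖ ≤ C := by
      rw [norm_smul]
      have habs : ‖ψ (t - m)‖ ≤ 1 := by
        rw [Real.norm_eq_abs, abs_le]
        exact ⟨by linarith [Real.smoothTransition.nonneg (t - m)],
          Real.smoothTransition.le_one (t - m)⟩
      calc ‖ψ (t - m)‖ * ‖d m‖ ≤ 1 * C :=
            mul_le_mul habs (hd m) (norm_nonneg _) zero_le_one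
        _ = C := one_mul C
    calc ‖x t - y t‖ = ‖(x t - x m) - ψ (t - m) • d m‖ := by rw [hyt2]; congr 1; abel
      _ ≤ ‖x t - x m‖ + ‖ψ (t - m) • d m‖ := norm_sub_le _ _
      _ ≤ C + C := add_le_add h1 h2
      _ = 2 * C := by ring
  · -- derivative bound
    set N : ℕ := ⌈t⌉₊ + 1 with hNdef
    have hdw : derivWithin y (Set.Ici 0) t
        = ∑ n ∈ Finset.range N, (deriv ψ (t - n)) • d n :=
      ((hyderiv t).hasDerivWithinAt).derivWithin (uniqueDiffOn_Ici 0 t ht)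
    rw [hdw]
    set n₀ : ℕ := ⌊t⌋₊ with hn0def
    have hvanish : ∀ n : ℕ, n ≠ n₀ → (deriv ψ (t - n)) • d n = 0 := by
      intro n hn
      rcases le_or_gt (t - n) 0 with h | h
      · rw [hψdef, st_deriv_nonpos h, zero_smul]
      rcases le_or_gt 1 (t - n) with h1 | h1
      · rw [hψdef, st_deriv_one_le h1, zero_smul]
      · exfalso
        apply hn
        rw [hn0def]
        symm
        rw [Nat.floor_eq_iff ht0]
        exact ⟨by linarith, by linarith⟩
    calc ‖∑ n ∈ Finset.range N, (deriv ψ (t - n)) • d n‖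
        ≤ ∑ n ∈ Finset.range N, ‖(deriv ψ (t - n)) • d n‖ := norm_sum_le _ _
      _ = ∑ n ∈ Finset.range N, if n = n₀ then ‖(deriv ψ (t - n₀)) • d n₀‖ else 0 := by
          refine Finset.sum_congr rfl fun n _ => ?_
          by_cases h : n = n₀
          · subst h; simp
          · rw [if_neg h, hvanish n h, norm_zero]
      _ = if n₀ ∈ Finset.range N then ‖(deriv ψ (t - n₀)) • d n₀‖ else 0 :=
          Finset.sum_ite_eq' _ _ _
      _ ≤ K * C := by
          split
          · rw [norm_smul]
            exact mul_le_mul (by simpa [Real.norm_eq_abs] using hK (t - n₀)) (hd n₀)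
              (norm_nonneg _) hKpos.le
          · positivity
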